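/- Let n ≥ 1 be an integer and let z ∈ B with 1/2 < |z| < 1. If w ∈ B, w ≠ 0, satisfies |φ_w(z)| < 1/4, then, writing r = |z|, ξ = z/|z| and η = w/|w|, one has | |w| − r | ≤ (2/3)(1−r) and |1 − ⟨ξ,η⟩| ≤ 32(1−r). -/

import Mathlib

open MeasureTheory Metric Set
open scoped ENNReal

noncomputable section

instance euclideanComplexMeasurableSpace {n : ℕ} :
    MeasurableSpace (EuclideanSpace ℂ (Fin n)) := borel _

instance euclideanComplexBorelSpace {n : ℕ} :
    BorelSpace (EuclideanSpace ℂ (Fin n)) := ⟨rfl⟩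

/-- The Hermitian inner product `⟨z,w⟩ = ∑ j, z j * conj (w j)` from the paper. -/
def hip {n : ℕ} (z w : EuclideanSpace ℂ (Fin n)) : ℂ :=
  ∑ j, z j * (starRingEnd ℂ) (w j)

/-- Orthogonal projection `P_w` onto the complex line spanned by `w`
(equal to `0` when `w = 0`). -/
def Pw {n : ℕ} (w z : EuclideanSpace ℂ (Fin n)) : EuclideanSpace ℂ (Fin n) :=
  ((hip z w) / ((‖w‖ : ℂ) ^ 2)) • w

/-- The involutive automorphism `φ_w` of the unit ball. -/
def phi {n : ℕ} (w z : EuclideanSpace ℂ (Fin n)) : EuclideanSpace ℂ (Fin n) :=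
  (1 - hip z w)⁻¹ • (w - Pw w z - ((Real.sqrt (1 - ‖w‖ ^ 2) : ℝ) : ℂ) • (z - Pw w z))

/-- The radial function `g(z) = ((n+1)/(2n)) ∫_{|z|}^1 (1-t²)^{n-1} t^{-2n+1} dt`. -/
def gfun (n : ℕ) (z : EuclideanSpace ℂ (Fin n)) : ℝ :=
  ((n + 1) / (2 * n)) * ∫ t in (‖z‖)..(1 : ℝ), (1 - t ^ 2) ^ (n - 1) * t ^ (-2 * (n : ℤ) + 1)

/-- Green's function for the invariant Laplacian: `G(z,w) = g(φ_w(z))`. -/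
def Gker {n : ℕ} (z w : EuclideanSpace ℂ (Fin n)) : ℝ := gfun n (phi w z)

/-- The invariant Green potential of `μ`, as an `ℝ≥0∞`-valued function. -/
def Gpot {n : ℕ} (μ : Measure (EuclideanSpace ℂ (Fin n)))
    (z : EuclideanSpace ℂ (Fin n)) : ℝ≥0∞ :=
  ∫⁻ w in ball (0 : EuclideanSpace ℂ (Fin n)) 1, ENNReal.ofReal (Gker z w) ∂μ

/-- Surface measure on the unit sphere of `ℂⁿ`, normalized so that `σ(S) = 1`. -/
def sigmaS (n : ℕ) : Measure (sphere (0 : EuclideanSpace ℂ (Fin n)) 1) :=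
  ((volume : Measure (EuclideanSpace ℂ (Fin n))).toSphere univ)⁻¹ •
    (volume : Measure (EuclideanSpace ℂ (Fin n))).toSphere

/-- The Korányi region `C(ξ,δ) = {z ∈ B : |1 - ⟨z,ξ⟩| < δ}`. -/
def Cset {n : ℕ} (ξ : EuclideanSpace ℂ (Fin n)) (δ : ℝ) : Set (EuclideanSpace ℂ (Fin n)) :=
  {z | z ∈ ball (0 : EuclideanSpace ℂ (Fin n)) 1 ∧ ‖1 - hip z ξ‖ < δ}

/-- The weighted measure `λ(E) = ∫_E (1-|w|)^n dμ(w)`. -/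
def lamRM {n : ℕ} (μ : Measure (EuclideanSpace ℂ (Fin n)))
    (E : Set (EuclideanSpace ℂ (Fin n))) : ℝ≥0∞ :=
  ∫⁻ w in E, ENNReal.ofReal ((1 - ‖w‖) ^ n) ∂μ

/-- The `p`-th mean `m_p(r, G_μ)` of the Green potential over the unit sphere. -/
def mpG {n : ℕ} (p : ℝ) (μ : Measure (EuclideanSpace ℂ (Fin n))) (r : ℝ) : ℝ≥0∞ :=
  (∫⁻ ξ, (Gpot μ (r • (ξ : EuclideanSpace ℂ (Fin n)))) ^ p ∂(sigmaS n)) ^ (1 / p)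

/-- The anisotropic ball `D(ξ,δ) = {η ∈ S : d(ξ,η) < δ}` on the unit sphere,
where `d(a,b) = |1 - ⟨a,b⟩|^{1/2}`. -/
def Dset {n : ℕ} (ξ : sphere (0 : EuclideanSpace ℂ (Fin n)) 1) (δ : ℝ) :
    Set (sphere (0 : EuclideanSpace ℂ (Fin n)) 1) :=
  {η | ‖1 - hip (η : EuclideanSpace ℂ (Fin n)) (ξ : EuclideanSpace ℂ (Fin n))‖ < δ ^ 2}

lemma hip_eq_inner {n : ℕ} (z w : EuclideanSpace ℂ (Fin n)) :
    hip z w = @inner ℂ _ _ w z := by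
  simp [hip, PiLp.inner_apply, mul_comm]

lemma norm_phi_sq {n : ℕ} (z w : EuclideanSpace ℂ (Fin n)) (hw0 : w ≠ 0)
    (hw : ‖w‖ < 1) (hz : ‖z‖ < 1) :
    ‖phi w z‖ ^ 2 * ‖1 - hip z w‖ ^ 2 =
      ‖1 - hip z w‖ ^ 2 - (1 - ‖w‖ ^ 2) * (1 - ‖z‖ ^ 2) := by
  have hwn : (0:ℝ) < ‖w‖ := norm_pos_iff.mpr hw0
  set c : ℂ := hip z w with hc
  set t : ℝ := Real.sqrt (1 - ‖w‖ ^ 2) with htdef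
  have ht2 : t ^ 2 = 1 - ‖w‖ ^ 2 := Real.sq_sqrt (by nlinarith)
  set P : EuclideanSpace ℂ (Fin n) := Pw w z with hP
  set Q : EuclideanSpace ℂ (Fin n) := z - P with hQ
  have hinner : @inner ℂ _ _ w z = c := (hip_eq_inner z w).symm
  have hww : @inner ℂ _ _ w w = ((‖w‖ : ℂ) ^ 2) := by
    rw [inner_self_eq_norm_sq_to_K]; norm_num
  have hwQ : @inner ℂ _ _ w Q = 0 := by
    rw [hQ, inner_sub_right, hinner, hP, Pw, inner_smul_right, hww, ← hc]
    have : ((‖w‖:ℂ))^2 ≠ 0 := by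
      simpa using (by exact_mod_cast hwn.ne' : (‖w‖:ℂ) ≠ 0)
    rw [div_mul_cancel₀ _ this, sub_self]
  -- w - P = (1 - c/‖w‖²) • w
  have hwP : w - P = ((1 : ℂ) - c / ((‖w‖ : ℂ) ^ 2)) • w := by
    rw [hP, Pw, sub_smul, one_smul, ← hc]
  set lam : ℂ := (1 : ℂ) - c / ((‖w‖ : ℂ) ^ 2) with hlam
  -- numerator vector
  have hv : phi w z = (1 - c)⁻¹ • (lam • w - (t : ℂ) • Q) := by
    rw [phi, ← hc, ← htdef, ← hP, ← hQ, hwP]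
  have hnv : ‖lam • w - (t : ℂ) • Q‖ ^ 2 = ‖lam‖ ^ 2 * ‖w‖ ^ 2 + t ^ 2 * ‖Q‖ ^ 2 := by
    rw [@norm_sub_sq ℂ]
    rw [inner_smul_left, inner_smul_right, hwQ]
    simp [norm_smul, mul_pow]
  -- ‖Q‖²
  have hPQ : @inner ℂ _ _ P Q = 0 := by
    rw [hP, Pw, inner_smul_left, ← hc, hwQ, mul_zero]
  have hz2 : ‖z‖ ^ 2 = ‖P‖ ^ 2 + ‖Q‖ ^ 2 := by
    have : z = P + Q := by rw [hQ]; abel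
    rw [this, @norm_add_sq ℂ, hPQ]
    simp
  have hnP : ‖P‖ ^ 2 = ‖c‖ ^ 2 / ‖w‖ ^ 2 := by
    rw [hP, Pw, norm_smul, ← hc]
    simp [mul_pow, map_div₀, div_pow]
    field_simp
  -- nonvanishing of 1 - c
  have hcb : ‖c‖ ≤ ‖z‖ * ‖w‖ := by
    have := norm_inner_le_norm (𝕜 := ℂ) w z
    rw [hinner] at this
    simpa [mul_comm] using this
  have h1c : (1 : ℂ) - c ≠ 0 := by
    intro h
    have : c = 1 := by linear_combination -h
    rw [this, norm_one] at hcb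
    nlinarith
  have key : ‖phi w z‖ ^ 2 * ‖1 - c‖ ^ 2 = ‖lam • w - (t : ℂ) • Q‖ ^ 2 := by
    rw [hv, norm_smul]
    have habs : ‖1 - c‖ ≠ 0 := by simpa using h1c
    simp only [norm_inv, mul_pow, inv_pow]
    field_simp
  have hS : (‖w‖ : ℝ) ≠ 0 := hwn.ne'
  have hQn : ‖Q‖ ^ 2 = ‖z‖ ^ 2 - (c.re ^ 2 + c.im ^ 2) / ‖w‖ ^ 2 := by
    have : ‖c‖ ^ 2 = c.re ^ 2 + c.im ^ 2 := by
      rw [Complex.sq_norm, Complex.normSq_apply]; ring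
    rw [eq_sub_iff_add_eq, ← this, ← hnP]; linarith [hz2]
  have e0 : lam * ((‖w‖ : ℂ) ^ 2) = ((‖w‖ ^ 2 : ℝ) : ℂ) - c := by
    have hSc : ((‖w‖ : ℂ)) ^ 2 ≠ 0 := by
      apply pow_ne_zero; exact_mod_cast hwn.ne'
    rw [hlam, sub_mul, one_mul, div_mul_cancel₀ _ hSc]; push_cast; ring
  have e1 : ‖lam‖ ^ 2 * ‖w‖ ^ 4 = (‖w‖ ^ 2 - c.re) ^ 2 + c.im ^ 2 := by
    have := congrArg (‖·‖) e0
    rw [norm_mul] at this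
    have h2 : ‖(‖w‖ : ℂ) ^ 2‖ = ‖w‖ ^ 2 := by
      simp [norm_pow, Complex.norm_real, abs_of_pos hwn]
    rw [h2] at this
    have h3 : ‖((‖w‖ ^ 2 : ℝ) : ℂ) - c‖ ^ 2 = (‖w‖ ^ 2 - c.re) ^ 2 + c.im ^ 2 := by
      rw [Complex.sq_norm, Complex.normSq_apply]
      simp only [Complex.sub_re, Complex.sub_im, Complex.ofReal_re, Complex.ofReal_im]
      ring
    calc ‖lam‖ ^ 2 * ‖w‖ ^ 4 = (‖lam‖ * ‖w‖ ^ 2) ^ 2 := by ring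
    _ = (‖w‖ ^ 2 - c.re) ^ 2 + c.im ^ 2 := by rw [this, h3]
  have e2 : ‖1 - c‖ ^ 2 = (1 - c.re) ^ 2 + c.im ^ 2 := by
    rw [Complex.sq_norm, Complex.normSq_apply]
    simp only [Complex.sub_re, Complex.sub_im, Complex.one_re, Complex.one_im]
    ring
  rw [key, hnv, hQn, ht2, e2]
  have e1' : ‖lam‖ ^ 2 = ((‖w‖ ^ 2 - c.re) ^ 2 + c.im ^ 2) / ‖w‖ ^ 4 := by
    rw [eq_div_iff (by positivity)]; exact e1
  rw [e1']
  field_simp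
  ring

lemma hip_smul {n : ℕ} (a b : ℝ) (z w : EuclideanSpace ℂ (Fin n)) :
    hip (a • z) (b • w) = (a : ℂ) * (b : ℂ) * hip z w := by
  simp only [hip, PiLp.smul_apply, Complex.real_smul, map_mul, Complex.conj_ofReal,
    Finset.mul_sum]
  exact Finset.sum_congr rfl (fun j _ => by ring)

set_option maxHeartbeats 1000000 in
/-- Inclusion `B*(z,1/4) ⊆ K(z, (2/3)(1-r), √32 (1-r)^{1/2})`: if `|φ_w(z)| < 1/4` then
`||w| - r| ≤ (2/3)(1-r)` and `|1 - ⟨ξ,η⟩| ≤ 32(1-r)`, where `ξ = z/|z|`, `η = w/|w|`. -/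
theorem statement10 (n : ℕ) (hn : 1 ≤ n) (z w : EuclideanSpace ℂ (Fin n))
    (hz : z ∈ ball (0 : EuclideanSpace ℂ (Fin n)) 1) (hz2 : 1 / 2 < ‖z‖)
    (hw : w ∈ ball (0 : EuclideanSpace ℂ (Fin n)) 1) (hw0 : w ≠ 0)
    (hphi : ‖phi w z‖ < 1 / 4) :
    |‖w‖ - ‖z‖| ≤ (2 / 3) * (1 - ‖z‖) ∧
    ‖1 - hip ((‖z‖⁻¹ : ℝ) • z) ((‖w‖⁻¹ : ℝ) • w)‖ ≤ 32 * (1 - ‖z‖) := by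
  rw [mem_ball, dist_zero_right] at hz hw
  have hs0 : (0:ℝ) < ‖w‖ := norm_pos_iff.mpr hw0
  have hr0 : (0:ℝ) < ‖z‖ := by linarith
  set r := ‖z‖ with hrdef
  set s := ‖w‖ with hsdef
  set c : ℂ := hip z w with hcdef
  set H : ℝ := ‖1 - c‖ with hHdef
  set A : ℝ := ‖phi w z‖ with hAdef
  have hid : A ^ 2 * H ^ 2 = H ^ 2 - (1 - s ^ 2) * (1 - r ^ 2) :=
    norm_phi_sq z w hw0 hw hz
  have hA0 : (0:ℝ) ≤ A := norm_nonneg _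
  have hcb : ‖c‖ ≤ r * s := by
    have := norm_inner_le_norm (𝕜 := ℂ) w z
    rw [← hip_eq_inner] at this
    simpa [mul_comm] using this
  have hrs1 : r * s < 1 := by nlinarith
  have hH : 1 - r * s ≤ H := by
    have h1 := norm_sub_norm_le (1 : ℂ) c
    simp only [norm_one] at h1
    calc 1 - r * s ≤ 1 - ‖c‖ := by linarith
    _ ≤ H := h1
  have hHpos : (0:ℝ) < H := lt_of_lt_of_le (by linarith) hH
  have hprod : (0:ℝ) ≤ (1 - s ^ 2) * (1 - r ^ 2) :=
    mul_nonneg (by nlinarith) (by nlinarith)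
  have hH2 : (1 - r * s) ^ 2 ≤ H ^ 2 := by nlinarith
  have hA16 : A ^ 2 ≤ 1 / 16 := by nlinarith
  -- (s - r)^2 ≤ (1/16) (1 - rs)^2
  have hint1 : (1 - s ^ 2) * (1 - r ^ 2) * (1 - r * s) ^ 2
      ≤ (1 - s ^ 2) * (1 - r ^ 2) * H ^ 2 := mul_le_mul_of_nonneg_left hH2 hprod
  have hint2 : A ^ 2 * H ^ 2 * (1 - r * s) ^ 2 ≤ (1 / 16) * (H ^ 2 * (1 - r * s) ^ 2) := by
    have hx : (0:ℝ) ≤ H ^ 2 * (1 - r * s) ^ 2 := by positivity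
    calc A ^ 2 * H ^ 2 * (1 - r * s) ^ 2 = A ^ 2 * (H ^ 2 * (1 - r * s) ^ 2) := by ring
    _ ≤ (1 / 16) * (H ^ 2 * (1 - r * s) ^ 2) := mul_le_mul_of_nonneg_right hA16 hx
  have hint3 : A ^ 2 * H ^ 2 * (1 - r * s) ^ 2
      = (H ^ 2 - (1 - s ^ 2) * (1 - r ^ 2)) * (1 - r * s) ^ 2 := by rw [hid]
  have h16 : (s - r) ^ 2 * H ^ 2 ≤ (1 / 16) * (1 - r * s) ^ 2 * H ^ 2 := by
    nlinarith [hint1, hint2, hint3]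
  have h16' : (s - r) ^ 2 ≤ (1 / 16) * (1 - r * s) ^ 2 :=
    le_of_mul_le_mul_right h16 (by positivity)
  have habs : 4 * |s - r| ≤ 1 - r * s := by
    have h1 : (4 * |s - r|) ^ 2 ≤ (1 - r * s) ^ 2 := by
      rw [mul_pow, sq_abs]; linarith [h16']
    exact le_of_pow_le_pow_left₀ two_ne_zero (by linarith) h1
  have h5 : s - r ≤ (2 / 5) * (1 - r) := by
    have := le_abs_self (s - r); nlinarith
  have h6 : r - s ≤ (2 / 3) * (1 - r) := by
    have := neg_abs_le (s - r); nlinarith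
  have part1 : |s - r| ≤ (2 / 3) * (1 - r) := by
    rw [abs_le]; constructor <;> nlinarith
  refine ⟨part1, ?_⟩
  -- part 2
  have hsplit : (1 : ℂ) - ((r⁻¹ : ℝ) : ℂ) * ((s⁻¹ : ℝ) : ℂ) * c
      = (((r * s : ℝ)) : ℂ)⁻¹ * ((((r * s : ℝ)) : ℂ) - c) := by
    have h1 : ((r : ℂ)) ≠ 0 := by exact_mod_cast hr0.ne'
    have h2 : ((s : ℂ)) ≠ 0 := by exact_mod_cast hs0.ne'
    push_cast
    field_simp
  rw [hip_smul, ← hcdef, hsplit, norm_mul, norm_inv, Complex.norm_real, Real.norm_eq_abs,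
    abs_of_pos (by positivity : (0:ℝ) < r * s), inv_mul_le_iff₀ (by positivity)]
  -- goal: ‖↑(r*s) - c‖ ≤ r * s * (32 * (1 - r))
  rcases le_or_gt r (15 / 16) with hcase | hcase
  · -- trivial bound
    have hb := norm_sub_le (((r * s : ℝ)) : ℂ) c
    rw [Complex.norm_real, Real.norm_eq_abs, abs_of_pos (by positivity : (0:ℝ) < r * s)] at hb
    have hm : 1 * (r * s) ≤ (16 * (1 - r)) * (r * s) :=
      mul_le_mul_of_nonneg_right (by linarith) (by positivity)
    linarith [hb, hcb, hm]
  · -- r close to 1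
    have hs_lb : 43 / 48 ≤ s := by
      have := neg_abs_le (s - r)
      linarith [part1]
    have h1s : 1 - s ≤ (5 / 3) * (1 - r) := by
      have := neg_abs_le (s - r); linarith [part1]
    have hH15 : (15 / 16) * H ^ 2 ≤ (1 - s ^ 2) * (1 - r ^ 2) := by
      have := mul_le_mul_of_nonneg_right hA16 (sq_nonneg H)
      linarith [hid]
    have ha1 : 1 - s ^ 2 ≤ 2 * (1 - s) := by nlinarith [sq_nonneg (1 - s)]
    have ha2 : 1 - r ^ 2 ≤ 2 * (1 - r) := by nlinarith [sq_nonneg (1 - r)]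
    have hx1 : (1 - s ^ 2) * (1 - r ^ 2) ≤ (2 * (1 - s)) * (2 * (1 - r)) :=
      mul_le_mul ha1 ha2 (by nlinarith [sq_nonneg (1 - r)]) (by linarith)
    have hx2 : (2 * (1 - s)) * (2 * (1 - r)) ≤ (2 * ((5 / 3) * (1 - r))) * (2 * (1 - r)) := by
      have := mul_le_mul_of_nonneg_right h1s (by linarith : (0:ℝ) ≤ 4 * (1 - r))
      linarith
    have hHK : H ^ 2 ≤ ((8 / 3) * (1 - r)) ^ 2 := by linarith [hH15, hx1, hx2]
    have hHle : H ≤ (8 / 3) * (1 - r) :=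
      le_of_pow_le_pow_left₀ two_ne_zero (by linarith) hHK
    have hb : ‖(((r * s : ℝ)) : ℂ) - c‖ ≤ (1 - r * s) + H := by
      have htri := norm_add_le ((((r * s : ℝ)) : ℂ) - 1) (1 - c)
      have he : (((r * s : ℝ)) : ℂ) - c = ((((r * s : ℝ)) : ℂ) - 1) + (1 - c) := by ring
      rw [← he] at htri
      have h2 : ‖(((r * s : ℝ)) : ℂ) - 1‖ = 1 - r * s := by
        rw [show ((((r * s : ℝ)) : ℂ) - 1) = -(((1 - r * s : ℝ)) : ℂ) by push_cast; ring,
          norm_neg, Complex.norm_real, Real.norm_eq_abs, abs_of_pos (by linarith)]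
      rw [h2] at htri
      exact htri
    have hrs_lb : (15 / 16) * (43 / 48) ≤ r * s :=
      mul_le_mul hcase.le hs_lb (by norm_num) (by linarith)
    have hm : (32 * (1 - r)) * ((15 / 16) * (43 / 48)) ≤ (32 * (1 - r)) * (r * s) :=
      mul_le_mul_of_nonneg_left hrs_lb (by linarith)
    linarith [hb, hH, hHle, hm]
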